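/- For every θ ∈ (0, π/2), the distance d(θ) = |ζ(θ) + conj(ζ(θ))| between the centres ζ(θ) and −conj(ζ(θ)) of the two circles of common radius r(θ) satisfies d(θ)² = 2·r(θ)²·(1 + cos(4θ)); this is the standard condition expressing that the two circles intersect at angle 4θ. -/

import Mathlib

open Complex

/-- For every θ ∈ (0, π/2), the distance d(θ) = |ζ(θ) + conj(ζ(θ))|
between the centres ζ(θ) and −conj(ζ(θ)) of the two circles of common radius r(θ)
satisfies d(θ)² = 2·r(θ)²·(1 + cos(4θ)), the standard condition expressing that the two
circles intersect at angle 4θ. -/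
theorem stmt13 (θ : ℝ) (hθ : θ ∈ Set.Ioo 0 (Real.pi / 2)) :
    let t : ℝ := Real.tan θ
    let r : ℝ := t / Real.sin (2 * θ)
    let ζ : ℂ := (↑(-(t * Real.cos (2 * θ) / Real.sin (2 * θ))) : ℂ) + (↑(1 + t) : ℂ) * I
    let d : ℝ := ‖ζ + starRingEnd ℂ ζ‖
    d ^ 2 = 2 * r ^ 2 * (1 + Real.cos (4 * θ)) := by
  intro t r ζ d
  have hs : Real.sin (2 * θ) ≠ 0 := by
    have h1 := Real.sin_pos_of_pos_of_lt_pi hθ.1 (by linarith [hθ.2, Real.pi_pos])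
    have h2 := Real.cos_pos_of_mem_Ioo ⟨by linarith [hθ.1, Real.pi_pos], hθ.2⟩
    rw [Real.sin_two_mul]; positivity
  have hζ : ζ + starRingEnd ℂ ζ = ((2 * (-(t * Real.cos (2 * θ) / Real.sin (2 * θ))) : ℝ) : ℂ) := by
    rw [Complex.add_conj]
    norm_cast
    simp only [ζ, Complex.add_re, Complex.ofReal_re, Complex.mul_re, Complex.ofReal_im,
      Complex.I_re, Complex.I_im]
    ring
  have hd : d = |2 * (-(t * Real.cos (2 * θ) / Real.sin (2 * θ)))| := by
    rw [show d = ‖ζ + starRingEnd ℂ ζ‖ from rfl, hζ, Complex.norm_real, Real.norm_eq_abs]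
  have hcos : Real.cos (4 * θ) = 2 * Real.cos (2 * θ) ^ 2 - 1 := by
    rw [show (4 : ℝ) * θ = 2 * (2 * θ) by ring, Real.cos_two_mul]
  rw [hd, _root_.sq_abs, hcos]
  simp only [r]
  field_simp
  ring
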